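/- Let r > 0 be real, q a natural number, 0 < Λ_R ≤ Λ ≤ Λ₀, and let P(y) = ∑_{k=0}^{q} a_k y^k be a polynomial with all a_k ≥ 0. Suppose f : ℝ → ℝ is differentiable on [Λ, Λ₀] and satisfies |x · f'(x)| ≤ x^(-r) · P(Real.log(x/Λ_R)) for all x ∈ [Λ, Λ₀]. Then |f(Λ)| ≤ |f(Λ₀)| + Λ^(-r) · Q(Real.log(Λ/Λ_R)), where Q is the polynomial of degree at most q with nonnegative coefficients given by Q(y) = ∑_{k=0}^{q} a_k · (k! / r^(k+1)) · ∑_{j=0}^{k} (r·y)^j / j!. -/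

import Mathlib

lemma hasDerivAt_S (r : ℝ) (k : ℕ) (y : ℝ) :
    HasDerivAt (fun y => ∑ j ∈ Finset.range (k+1), (r*y)^j / (Nat.factorial j : ℝ))
      (r * ∑ j ∈ Finset.range k, (r*y)^j / (Nat.factorial j : ℝ)) y := by
  induction k with
  | zero =>
    have h1 : (fun y : ℝ => ∑ j ∈ Finset.range (0+1), (r*y)^j / (Nat.factorial j : ℝ))
        = fun _ => (1:ℝ) := by funext y; simp
    rw [h1]
    simpa using hasDerivAt_const y (1:ℝ)
  | succ k ih =>
    have h2 : HasDerivAt (fun y => (r*y)^(k+1) / (Nat.factorial (k+1) : ℝ))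
        (r * ((r*y)^k / (Nat.factorial k : ℝ))) y := by
      have hmul : HasDerivAt (fun y : ℝ => r * y) r y := by
        simpa using (hasDerivAt_id y).const_mul r
      have := (hmul.pow (k+1)).div_const (Nat.factorial (k+1) : ℝ)
      refine this.congr_deriv ?_
      rw [Nat.factorial_succ]
      have hk : (Nat.factorial k : ℝ) ≠ 0 := by positivity
      push_cast
      field_simp
    have := ih.add h2
    have heq : (fun y => ∑ j ∈ Finset.range (k+2), (r*y)^j / (Nat.factorial j : ℝ))
        = fun y => (∑ j ∈ Finset.range (k+1), (r*y)^j / (Nat.factorial j : ℝ))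
            + (r*y)^(k+1) / (Nat.factorial (k+1) : ℝ) := by
      funext y; rw [Finset.sum_range_succ]
    rw [heq, Finset.sum_range_succ]
    refine this.congr_deriv ?_
    ring

lemma hasDerivAt_Gk (r : ℝ) (hr : 0 < r) (ΛR : ℝ) (hΛR : 0 < ΛR) (k : ℕ)
    (x : ℝ) (hx : 0 < x) :
    HasDerivAt (fun x : ℝ => x ^ (-r) *
        (((Nat.factorial k : ℝ) / r ^ (k + 1)) *
          ∑ j ∈ Finset.range (k+1), (r * Real.log (x / ΛR))^j / (Nat.factorial j : ℝ)))
      (-(x ^ (-r) / x * (Real.log (x / ΛR))^k)) x := by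
  have hL : HasDerivAt (fun x : ℝ => Real.log (x / ΛR)) x⁻¹ x := by
    have h := (Real.hasDerivAt_log hx.ne').sub_const (Real.log ΛR)
    have heq : (fun x : ℝ => Real.log x - Real.log ΛR) =ᶠ[nhds x] fun x => Real.log (x / ΛR) := by
      filter_upwards [eventually_gt_nhds hx] with y hy
      rw [Real.log_div hy.ne' hΛR.ne']
    exact h.congr_of_eventuallyEq heq.symm
  have hS := (hasDerivAt_S r k (Real.log (x / ΛR))).comp x hL
  have hpow : HasDerivAt (fun x : ℝ => x ^ (-r)) (-r * x ^ (-r - 1)) x :=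
    Real.hasDerivAt_rpow_const (Or.inl hx.ne')
  have h := hpow.mul (hS.const_mul ((Nat.factorial k : ℝ) / r ^ (k + 1)))
  refine h.congr_deriv ?_
  have hxr : x ^ (-r - 1) = x ^ (-r) / x := by
    rw [Real.rpow_sub hx, Real.rpow_one]
  simp only [Function.comp]
  rw [hxr, Finset.sum_range_succ, mul_pow]
  have hk : (Nat.factorial k : ℝ) ≠ 0 := by positivity
  field_simp
  ring

/-- Estimate (intdown): for an irrelevant coupling with `|x f'(x)| ≤ x^(-r) P(log(x/Λ_R))`
on `[Λ, Λ₀]`, integrating downward gives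
`|f(Λ)| ≤ |f(Λ₀)| + Λ^(-r) Q(log(Λ/Λ_R))` with
`Q(y) = ∑_k a_k (k!/r^(k+1)) ∑_{j≤k} (r y)^j / j!`. -/
theorem irrelevant_downward_estimate (r : ℝ) (hr : 0 < r) (q : ℕ)
    (ΛR Λ Λ₀ : ℝ) (hΛR : 0 < ΛR) (hΛ : ΛR ≤ Λ) (hΛ₀ : Λ ≤ Λ₀)
    (a : ℕ → ℝ) (ha : ∀ k, 0 ≤ a k)
    (f f' : ℝ → ℝ)
    (hderiv : ∀ x ∈ Set.Icc Λ Λ₀, HasDerivWithinAt f (f' x) (Set.Icc Λ Λ₀) x)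
    (hbound : ∀ x ∈ Set.Icc Λ Λ₀,
      |x * f' x| ≤ x ^ (-r) *
        ∑ k ∈ Finset.range (q + 1), a k * (Real.log (x / ΛR)) ^ k) :
    |f Λ| ≤ |f Λ₀| + Λ ^ (-r) *
      ∑ k ∈ Finset.range (q + 1), a k *
        (((Nat.factorial k : ℝ) / r ^ (k + 1)) *
          ∑ j ∈ Finset.range (k + 1),
            (r * Real.log (Λ / ΛR)) ^ j / (Nat.factorial j)) := by
  set G : ℝ → ℝ := fun x => ∑ k ∈ Finset.range (q + 1), a k *
      (x ^ (-r) * (((Nat.factorial k : ℝ) / r ^ (k + 1)) *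
        ∑ j ∈ Finset.range (k+1), (r * Real.log (x / ΛR))^j / (Nat.factorial j : ℝ))) with hGdef
  set P : ℝ → ℝ := fun x => ∑ k ∈ Finset.range (q + 1), a k * (Real.log (x / ΛR)) ^ k with hPdef
  have hxpos : ∀ x ∈ Set.Icc Λ Λ₀, 0 < x := fun x hx => lt_of_lt_of_le (hΛR.trans_le hΛ) hx.1
  have hG : ∀ x : ℝ, 0 < x → HasDerivAt G (-(x ^ (-r) / x * P x)) x := by
    intro x hx
    have h := HasDerivAt.fun_sum (u := Finset.range (q+1)) (fun k _hk =>
      ((hasDerivAt_Gk r hr ΛR hΛR k x hx).const_mul (a k)))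
    refine h.congr_deriv ?_
    rw [neg_mul_eq_neg_mul, hPdef, Finset.mul_sum]
    exact Finset.sum_congr rfl fun k _ => by ring
  -- nonnegativity of G on [ΛR, ∞)
  have hGnonneg : ∀ x : ℝ, ΛR ≤ x → 0 ≤ G x := by
    intro x hx
    have hL : 0 ≤ Real.log (x / ΛR) := Real.log_nonneg ((one_le_div hΛR).mpr hx)
    apply Finset.sum_nonneg
    intro k _
    have h1 : (0:ℝ) ≤ ∑ j ∈ Finset.range (k+1), (r * Real.log (x / ΛR))^j / (Nat.factorial j : ℝ) := by
      apply Finset.sum_nonneg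
      intro j _
      have : 0 ≤ r * Real.log (x / ΛR) := mul_nonneg hr.le hL
      positivity
    have h2 : (0:ℝ) ≤ (Nat.factorial k : ℝ) / r ^ (k + 1) := by positivity
    have h3 : (0:ℝ) ≤ x ^ (-r) := Real.rpow_nonneg (le_of_lt (hΛR.trans_le hx)) _
    exact mul_nonneg (ha k) (mul_nonneg h3 (mul_nonneg h2 h1))
  have hPnonneg : ∀ x ∈ Set.Icc Λ Λ₀, 0 ≤ P x := by
    intro x hx
    have hL : 0 ≤ Real.log (x / ΛR) := Real.log_nonneg ((one_le_div hΛR).mpr (hΛ.trans hx.1))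
    exact Finset.sum_nonneg fun k _ => mul_nonneg (ha k) (pow_nonneg hL k)
  -- bound on |f'|
  have hbound' : ∀ x ∈ Set.Icc Λ Λ₀, |f' x| ≤ x ^ (-r) / x * P x := by
    intro x hx
    have hxp := hxpos x hx
    have h := hbound x hx
    rw [abs_mul, abs_of_pos hxp] at h
    rw [div_mul_eq_mul_div, le_div_iff₀ hxp, mul_comm (|f' x|) x]
    exact h
  -- continuity
  have hfc : ContinuousOn f (Set.Icc Λ Λ₀) := fun x hx => (hderiv x hx).continuousWithinAt
  have hGc : ContinuousOn G (Set.Icc Λ Λ₀) := fun x hx =>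
    ((hG x (hxpos x hx)).continuousAt).continuousWithinAt
  have hint : ∀ x ∈ interior (Set.Icc Λ Λ₀), x ∈ Set.Icc Λ Λ₀ := fun x hx =>
    interior_subset hx
  -- f - G monotone
  have hmono : MonotoneOn (fun x => f x - G x) (Set.Icc Λ Λ₀) := by
    apply monotoneOn_of_hasDerivWithinAt_nonneg (convex_Icc Λ Λ₀) (hfc.sub hGc)
      (f' := fun x => f' x + x ^ (-r) / x * P x)
    · intro x hx
      have hx' := hint x hx
      have h1 := (hderiv x hx').mono (interior_subset)
      have h2 := ((hG x (hxpos x hx')).hasDerivWithinAt (s := interior (Set.Icc Λ Λ₀)))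
      have := h1.sub h2
      simpa [sub_neg_eq_add] using this
    · intro x hx
      have hx' := hint x hx
      have := (abs_le.mp (hbound' x hx')).1
      linarith
  -- f + G antitone
  have hanti : AntitoneOn (fun x => f x + G x) (Set.Icc Λ Λ₀) := by
    apply antitoneOn_of_hasDerivWithinAt_nonpos (convex_Icc Λ Λ₀) (hfc.add hGc)
      (f' := fun x => f' x + -(x ^ (-r) / x * P x))
    · intro x hx
      have hx' := hint x hx
      have h1 := (hderiv x hx').mono (interior_subset)
      have h2 := ((hG x (hxpos x hx')).hasDerivWithinAt (s := interior (Set.Icc Λ Λ₀)))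
      exact h1.add h2
    · intro x hx
      have hx' := hint x hx
      have := (abs_le.mp (hbound' x hx')).2
      linarith
  have hmemΛ : Λ ∈ Set.Icc Λ Λ₀ := ⟨le_refl _, hΛ₀⟩
  have hmemΛ₀ : Λ₀ ∈ Set.Icc Λ Λ₀ := ⟨hΛ₀, le_refl _⟩
  have h1 : f Λ - G Λ ≤ f Λ₀ - G Λ₀ := hmono hmemΛ hmemΛ₀ hΛ₀
  have h2 : f Λ₀ + G Λ₀ ≤ f Λ + G Λ := hanti hmemΛ hmemΛ₀ hΛ₀
  have hG0 : 0 ≤ G Λ₀ := hGnonneg Λ₀ (hΛ.trans hΛ₀)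
  have hRHS : Λ ^ (-r) * ∑ k ∈ Finset.range (q + 1), a k *
        (((Nat.factorial k : ℝ) / r ^ (k + 1)) *
          ∑ j ∈ Finset.range (k + 1),
            (r * Real.log (Λ / ΛR)) ^ j / (Nat.factorial j)) = G Λ := by
    rw [hGdef, Finset.mul_sum]
    exact Finset.sum_congr rfl fun k _ => by ring
  rw [hRHS]
  have hfa := abs_le.mp (le_refl |f Λ₀|)
  rw [abs_le]
  constructor
  · have := neg_abs_le (f Λ₀)
    linarith
  · have := le_abs_self (f Λ₀)
    linarith
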